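/- Eckmann–Hilton for monoid-valued sphere maps: let M be a topological monoid, k ≥ 1, and m ∈ M an element such that there is a homotopy H from (x,y) ↦ x·y to (x,y) ↦ y·x on the path component of m, whose track loop η(t) = H(m,m,t) acts trivially on π_k(M, m²). Then for any based maps φ, ψ : (Sᵏ,1) → (M,m), the pointwise product φ·ψ is based-homotopic to the concatenation (φ·c_m) ∗ (ψ·c_m), where c_m is the constant map at m. In particular, taking ψ = φ̄ the pointwise reverse, φ·φ̄ is nullhomotopic (based-homotopic to the constant map at m²). -/

import Mathlib

open scoped Topology Topology.Homotopy unitInterval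

/-- Pointwise product of two generalized loops in a topological monoid. -/
def ptMul {N : Type*} {M : Type*} [Monoid M] [TopologicalSpace M] [ContinuousMul M]
    {a b : M} (f : Ω^ N M a) (g : Ω^ N M b) : Ω^ N M (a * b) :=
  ⟨⟨fun y => f.1 y * g.1 y, f.1.continuous.mul g.1.continuous⟩, by
    intro y hy
    simp only [ContinuousMap.coe_mk]
    rw [f.2 y hy, g.2 y hy]⟩

namespace Stmt4Aux

noncomputable section

variable {n : ℕ} {M : Type*} [TopologicalSpace M]

/-- sup-norm "radius" of a point of the cube, normalized so that the boundary is r = 1. -/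
def rad (y : I^ Fin (n + 1)) : ℝ :=
  Finset.univ.sup' Finset.univ_nonempty fun i => |2 * (y i : ℝ) - 1|

theorem coord_le_rad (y : I^ Fin (n + 1)) (i : Fin (n + 1)) :
    |2 * (y i : ℝ) - 1| ≤ rad y := by
  rw [rad]; exact Finset.le_sup' (fun j => |2 * (y j : ℝ) - 1|) (Finset.mem_univ i)

theorem rad_le_one (y : I^ Fin (n + 1)) : rad y ≤ 1 := by
  refine Finset.sup'_le _ _ fun i _ => ?_
  have h1 := (y i).2.1
  have h2 := (y i).2.2
  rw [abs_le]; constructor <;> nlinarith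

theorem exists_rad_eq (y : I^ Fin (n + 1)) :
    ∃ i, rad y = |2 * (y i : ℝ) - 1| := by
  obtain ⟨i, -, h⟩ := Finset.exists_mem_eq_sup' (Finset.univ_nonempty)
    (fun i => |2 * (y i : ℝ) - 1|)
  exact ⟨i, h⟩

theorem rad_boundary {y : I^ Fin (n + 1)} (hy : y ∈ Cube.boundary (Fin (n + 1))) :
    rad y = 1 := by
  obtain ⟨i, hi⟩ := hy
  refine le_antisymm (rad_le_one y) ?_
  have : |2 * (y i : ℝ) - 1| = 1 := by
    rcases hi with h | h <;> rw [h] <;> norm_num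
  rw [← this]; exact coord_le_rad y i

@[fun_prop]
theorem continuous_rad : Continuous (rad (n := n)) := by
  rw [continuous_iff_continuousAt]
  intro y
  refine Filter.Tendsto.finset_sup'_nhds_apply Finset.univ_nonempty fun i _ => ?_
  have h : Continuous fun a : I^ Fin (n + 1) => |2 * (a i : ℝ) - 1| := by fun_prop
  exact h.continuousAt

/-- clamp to the unit interval -/
def pr (x : ℝ) : I := Set.projIcc 0 1 zero_le_one x

@[fun_prop]
theorem continuous_pr : Continuous pr := by unfold pr; exact continuous_projIcc

theorem pr_coe (t : I) : pr (t : ℝ) = t := by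
  simp [pr, Set.projIcc_val]

theorem pr_zero : pr 0 = 0 := pr_coe 0
theorem pr_one : pr 1 = 1 := pr_coe 1

/-- radial stretch of the cube: maps the subcube of radius `1 - s/2` onto the whole cube. -/
def stretch (s : I) (y : I^ Fin (n + 1)) : I^ Fin (n + 1) :=
  fun i => pr (1 / 2 + ((y i : ℝ) - 1 / 2) / (1 - (s : ℝ) / 2))

theorem denom_pos (s : I) : (0 : ℝ) < 1 - (s : ℝ) / 2 := by
  have := s.2.2
  linarith

theorem stretch_zero (y : I^ Fin (n + 1)) : stretch 0 y = y := by
  funext i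
  have : (1 : ℝ) / 2 + ((y i : ℝ) - 1 / 2) / (1 - ((0 : I) : ℝ) / 2) = (y i : ℝ) := by
    rw [Set.Icc.coe_zero]; ring
  rw [stretch, this, pr_coe]

theorem stretch_one (y : I^ Fin (n + 1)) :
    stretch 1 y = fun i => pr (2 * (y i : ℝ) - 1 / 2) := by
  funext i
  have : (1 : ℝ) / 2 + ((y i : ℝ) - 1 / 2) / (1 - ((1 : I) : ℝ) / 2) = 2 * (y i : ℝ) - 1 / 2 := by
    rw [Set.Icc.coe_one]; norm_num; ring
  rw [stretch, this]

theorem stretch_mem_boundary (s : I) (y : I^ Fin (n + 1)) (h : rad y = 1 - (s : ℝ) / 2) :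
    stretch s y ∈ Cube.boundary (Fin (n + 1)) := by
  obtain ⟨i, hi⟩ := exists_rad_eq y
  have hpos := denom_pos s
  rw [h] at hi
  rcases abs_eq (le_of_lt hpos) |>.mp hi.symm with h1 | h1
  · refine ⟨i, Or.inr ?_⟩
    have e : ((y i : ℝ) - 1 / 2) / (1 - (s : ℝ) / 2) = 1 / 2 := by
      rw [div_eq_iff (ne_of_gt hpos)]; linarith
    have : (1 : ℝ) / 2 + ((y i : ℝ) - 1 / 2) / (1 - (s : ℝ) / 2) = 1 := by
      rw [e]; norm_num
    rw [stretch, this, pr_one]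
  · refine ⟨i, Or.inl ?_⟩
    have e : ((y i : ℝ) - 1 / 2) / (1 - (s : ℝ) / 2) = -(1 / 2) := by
      rw [div_eq_iff (ne_of_gt hpos)]; linarith
    have : (1 : ℝ) / 2 + ((y i : ℝ) - 1 / 2) / (1 - (s : ℝ) / 2) = 0 := by
      rw [e]; norm_num
    rw [stretch, this, pr_zero]

theorem half_mem_boundary (y : I^ Fin (n + 1)) (h : rad y = 1 / 2) :
    (fun i => pr (2 * (y i : ℝ) - 1 / 2)) ∈ Cube.boundary (Fin (n + 1)) := by
  have := stretch_mem_boundary 1 y (by rw [h]; norm_num)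
  rwa [stretch_one] at this

/-- Collar construction: shrink `b` to the inner half-cube and fill the outer shell
with the track `η` radially. -/
def collarFun (η : C(I, M)) (b : C(I^ Fin (n + 1), M)) : (I^ Fin (n + 1)) → M :=
  fun y => if rad y ≤ 1 / 2 then b (fun i => pr (2 * (y i : ℝ) - 1 / 2))
    else η (pr (2 - 2 * rad y))

theorem continuous_collarFun {p : M} (η : C(I, M)) (hη1 : η 1 = p)
    (b : C(I^ Fin (n + 1), M)) (hb : ∀ y ∈ Cube.boundary (Fin (n + 1)), b y = p) :
    Continuous (collarFun η b) := by
  refine Continuous.if_le ?_ ?_ continuous_rad continuous_const ?_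
  · exact b.continuous.comp (continuous_pi fun i => continuous_pr.comp (by fun_prop))
  · exact η.continuous.comp (continuous_pr.comp (by fun_prop))
  · intro y hy
    have h2 : (2 : ℝ) - 2 * rad y = 1 := by rw [hy]; norm_num
    rw [hb _ (half_mem_boundary y hy), h2, pr_one, hη1]

/-- The collar construction as a generalized loop. -/
def collarLoop {p : M} (η : C(I, M)) (b : Ω^ (Fin (n + 1)) M p)
    (hη0 : η 0 = p) (hη1 : η 1 = p) : Ω^ (Fin (n + 1)) M p :=
  ⟨⟨collarFun η b.1, continuous_collarFun η hη1 b.1 b.2⟩, by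
    intro y hy
    have h1 : rad y = 1 := rad_boundary hy
    show collarFun η b.1 y = p
    rw [collarFun, if_neg (by rw [h1]; norm_num), h1]
    have h2 : (2 : ℝ) - 2 * 1 = 0 := by norm_num
    rw [h2, pr_zero, hη0]⟩

/-- A free homotopy `J : a ⇒ b` whose track on the boundary is `η` (constant in the
space variable) yields a rel-boundary homotopy from `a` to the `η`-collar of `b`. -/
theorem homotopic_collar {p : M} (a b : Ω^ (Fin (n + 1)) M p) (η : C(I, M))
    (hη0 : η 0 = p) (hη1 : η 1 = p) (J : ContinuousMap.Homotopy a.1 b.1)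
    (htrack : ∀ (t : I) y, y ∈ Cube.boundary (Fin (n + 1)) → J (t, y) = η t) :
    GenLoop.Homotopic a (collarLoop η b hη0 hη1) := by
  have hst : Continuous fun q : I × (I^ Fin (n + 1)) => stretch q.1 q.2 := by
    refine continuous_pi fun i => continuous_pr.comp ?_
    exact Continuous.add continuous_const
      (Continuous.div (by fun_prop) (by fun_prop) fun q => ne_of_gt (denom_pos q.1))
  have hcont : Continuous fun q : I × (I^ Fin (n + 1)) =>
      if rad q.2 ≤ 1 - (q.1 : ℝ) / 2 then J (q.1, stretch q.1 q.2)
      else η (pr (2 - 2 * rad q.2)) := by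
    refine Continuous.if_le ?_ ?_ (continuous_rad.comp continuous_snd) (by fun_prop) ?_
    · exact J.continuous.comp (continuous_fst.prodMk hst)
    · exact η.continuous.comp (continuous_pr.comp (by fun_prop))
    · rintro ⟨t, y⟩ hq
      have hbd := stretch_mem_boundary t y hq
      have h2 : (2 : ℝ) - 2 * rad y = (t : ℝ) := by
        simp only [] at hq ⊢; rw [hq]; ring
      rw [htrack t _ hbd, h2, pr_coe]
  refine ⟨⟨⟨⟨fun q => if rad q.2 ≤ 1 - (q.1 : ℝ) / 2 then J (q.1, stretch q.1 q.2)
      else η (pr (2 - 2 * rad q.2)), hcont⟩, ?_, ?_⟩, ?_⟩⟩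
  · intro y
    simp only [ContinuousMap.coe_mk]
    rw [if_pos (by rw [Set.Icc.coe_zero]; norm_num; exact rad_le_one y), stretch_zero,
      J.apply_zero]
  · intro y
    simp only [ContinuousMap.coe_mk]
    show _ = collarFun η b.1 y
    have hc : 1 - ((1 : I) : ℝ) / 2 = 1 / 2 := by rw [Set.Icc.coe_one]; norm_num
    rw [collarFun, hc, stretch_one, J.apply_one]
  · intro t y hy
    simp only [ContinuousMap.coe_mk]
    have h1 : rad y = 1 := rad_boundary hy
    by_cases hc : rad y ≤ 1 - (t : ℝ) / 2
    · have ht0 : t = 0 := by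
        have h2 := t.2.1
        refine Subtype.ext (le_antisymm ?_ h2)
        rw [h1] at hc; simp only [Set.Icc.coe_zero]; linarith
      rw [if_pos hc, ht0, stretch_zero, J.apply_zero]
    · rw [if_neg hc, h1]
      have h2 : (2 : ℝ) - 2 * 1 = 0 := by norm_num
      rw [h2, pr_zero, hη0]
      exact (GenLoop.boundary a y hy).symm

/-- Two loops connected by free homotopies with the *same* boundary track are
homotopic rel boundary (comparison through the common collar). -/
theorem homotopic_of_same_track {p : M} (a b : Ω^ (Fin (n + 1)) M p) (η : C(I, M))
    (hη0 : η 0 = p) (hη1 : η 1 = p)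
    (J : ContinuousMap.Homotopy a.1 b.1)
    (htJ : ∀ (t : I) y, y ∈ Cube.boundary (Fin (n + 1)) → J (t, y) = η t)
    (F : ContinuousMap.Homotopy b.1 b.1)
    (htF : ∀ (t : I) y, y ∈ Cube.boundary (Fin (n + 1)) → F (t, y) = η t) :
    GenLoop.Homotopic a b :=
  (homotopic_collar a b η hη0 hη1 J htJ).trans
    (homotopic_collar b b η hη0 hη1 F htF).symm

/-- A path in the cube from the corner `0` to `y`. -/
def cornerPath (y : I^ Fin (n + 1)) : Path (fun _ => 0 : I^ Fin (n + 1)) y where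
  toFun := fun t i => pr ((t : ℝ) * (y i : ℝ))
  continuous_toFun := by
    refine continuous_pi fun i => continuous_pr.comp ?_
    fun_prop
  source' := by
    funext i
    show pr (((0 : I) : ℝ) * (y i : ℝ)) = 0
    have : ((0 : I) : ℝ) * (y i : ℝ) = 0 := by rw [Set.Icc.coe_zero]; ring
    rw [this, pr_zero]
  target' := by
    funext i
    show pr (((1 : I) : ℝ) * (y i : ℝ)) = y i
    have : ((1 : I) : ℝ) * (y i : ℝ) = (y i : ℝ) := by rw [Set.Icc.coe_one]; ring
    rw [this, pr_coe]

section Alg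

/-- Pointwise multiplication descends to homotopy classes. -/
theorem ptMul_homotopic {Mo : Type*} [Monoid Mo] [TopologicalSpace Mo] [ContinuousMul Mo]
    {a b : Mo} {f f' : Ω^ (Fin (n + 1)) Mo a} {g g' : Ω^ (Fin (n + 1)) Mo b}
    (hf : GenLoop.Homotopic f f') (hg : GenLoop.Homotopic g g') :
    GenLoop.Homotopic (ptMul f g) (ptMul f' g') := by
  obtain ⟨F⟩ := hf; obtain ⟨G⟩ := hg
  refine ⟨⟨⟨⟨fun q => F q * G q, F.continuous.mul G.continuous⟩, ?_, ?_⟩, ?_⟩⟩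
  · intro y
    simp only [ContinuousMap.coe_mk, ContinuousMap.HomotopyWith.apply_zero]
    rfl
  · intro y
    simp only [ContinuousMap.coe_mk, ContinuousMap.HomotopyWith.apply_one]
    rfl
  · intro t y hy
    simp only [ContinuousMap.coe_mk]
    rw [F.eq_fst t hy, G.eq_fst t hy]
    rfl

/-- Pointwise multiplication commutes with concatenation along a coordinate. -/
theorem ptMul_transAt {Mo : Type*} [Monoid Mo] [TopologicalSpace Mo] [ContinuousMul Mo]
    {a b : Mo} (f f' : Ω^ (Fin (n + 1)) Mo a) (g g' : Ω^ (Fin (n + 1)) Mo b) :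
    ptMul (GenLoop.transAt 0 f f') (GenLoop.transAt 0 g g')
      = GenLoop.transAt 0 (ptMul f g) (ptMul f' g') := by
  refine GenLoop.ext _ _ fun y => ?_
  show (GenLoop.transAt 0 f f') y * (GenLoop.transAt 0 g g') y
    = (GenLoop.transAt 0 (ptMul f g) (ptMul f' g')) y
  simp only [GenLoop.transAt, GenLoop.coe_copy]
  split_ifs <;> rfl

/-- Pointwise multiplication (by a constant) commutes with reversal. -/
theorem ptMul_symmAt {Mo : Type*} [Monoid Mo] [TopologicalSpace Mo] [ContinuousMul Mo]
    {a b : Mo} (f : Ω^ (Fin (n + 1)) Mo a) :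
    ptMul (GenLoop.symmAt 0 f) (GenLoop.const (x := b))
      = GenLoop.symmAt 0 (ptMul f GenLoop.const) := by
  refine GenLoop.ext _ _ fun y => ?_
  show (GenLoop.symmAt 0 f) y * (GenLoop.const : Ω^ (Fin (n + 1)) Mo b) y
    = (GenLoop.symmAt 0 (ptMul f GenLoop.const)) y
  simp only [GenLoop.symmAt, GenLoop.coe_copy, GenLoop.const_apply]
  rfl

end Alg

end

end Stmt4Aux


/-- Eckmann–Hilton for monoid-valued sphere maps. -/
theorem stmt_4 (n : ℕ) {M : Type*} [Monoid M] [TopologicalSpace M] [ContinuousMul M]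
    (m : M)
    (mul₁ mul₂ : C(pathComponent m × pathComponent m, M))
    (hmul₁ : ∀ p, mul₁ p = (p.1 : M) * (p.2 : M))
    (hmul₂ : ∀ p, mul₂ p = (p.2 : M) * (p.1 : M))
    (H : mul₁.Homotopy mul₂)
    (Hmem : ∀ t p, H (t, p) ∈ pathComponent (m * m))
    (hη : ∀ β : Ω^ (Fin (n + 1)) M (m * m),
      ∃ F : ContinuousMap.Homotopy β.1 β.1,
        ∀ (t : I) y, y ∈ Cube.boundary (Fin (n + 1)) →
          F (t, y) = H (t, (⟨m, mem_pathComponent_self m⟩, ⟨m, mem_pathComponent_self m⟩)))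
    (φ ψ : Ω^ (Fin (n + 1)) M m) :
    ((⟦ptMul φ ψ⟧ : π_ (n + 1) M (m * m)) =
      ((· * ·) : π_ (n + 1) M (m * m) → π_ (n + 1) M (m * m) → π_ (n + 1) M (m * m))
        ⟦ptMul φ GenLoop.const⟧ ⟦ptMul ψ GenLoop.const⟧)
    ∧ (⟦ptMul φ (GenLoop.symmAt 0 φ)⟧ : π_ (n + 1) M (m * m)) = (1 : π_ (n + 1) M (m * m))
    ∧ (⟦ptMul (GenLoop.symmAt 0 φ) φ⟧ : π_ (n + 1) M (m * m)) = (1 : π_ (n + 1) M (m * m)) := by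
  classical
  -- the track loop η
  let η : C(I, M) :=
    ⟨fun t => H (t, (⟨m, mem_pathComponent_self m⟩, ⟨m, mem_pathComponent_self m⟩)),
      H.continuous.comp (continuous_id.prodMk continuous_const)⟩
  have hη0 : η 0 = m * m := by
    show H (0, _) = m * m
    rw [H.apply_zero, hmul₁]
  have hη1 : η 1 = m * m := by
    show H (1, _) = m * m
    rw [H.apply_one, hmul₂]
  -- every value of a loop at m lies in the path component of m
  have hmem : ∀ (χ : Ω^ (Fin (n + 1)) M m) (y : I^ Fin (n + 1)), χ y ∈ pathComponent m := by
    intro χ y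
    have h0 : χ (fun _ => 0) = m := GenLoop.boundary χ _ ⟨0, Or.inl rfl⟩
    have hj : Joined (χ (fun _ => 0)) (χ y) := ⟨(Stmt4Aux.cornerPath y).map χ.1.continuous⟩
    rwa [h0] at hj
  -- the key step: c·χ and χ·c are homotopic rel boundary
  have key : ∀ χ : Ω^ (Fin (n + 1)) M m,
      GenLoop.Homotopic (ptMul GenLoop.const χ) (ptMul χ GenLoop.const) := by
    intro χ
    obtain ⟨F, hF⟩ := hη (ptMul χ GenLoop.const)
    let G : ContinuousMap.Homotopy (ptMul GenLoop.const χ).1 (ptMul χ GenLoop.const).1 :=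
      { toFun := fun q =>
          H (q.1, (⟨m, mem_pathComponent_self m⟩, ⟨χ q.2, hmem χ q.2⟩)),
        continuous_toFun := H.continuous.comp (continuous_fst.prodMk
          (Continuous.prodMk continuous_const
            (Continuous.subtype_mk (χ.1.continuous.comp continuous_snd) _))),
        map_zero_left := fun y => by
          show H (0, _) = _
          rw [H.apply_zero, hmul₁]
          rfl,
        map_one_left := fun y => by
          show H (1, _) = _
          rw [H.apply_one, hmul₂]
          rfl }
    refine Stmt4Aux.homotopic_of_same_track _ _ η hη0 hη1 G ?_ F ?_
    · intro t y hy
      show H (t, (_, ⟨χ y, _⟩)) = η t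
      have hb : (⟨χ y, hmem χ y⟩ : pathComponent m)
          = ⟨m, mem_pathComponent_self m⟩ := Subtype.ext (GenLoop.boundary χ y hy)
      rw [hb]
      rfl
    · intro t y hy
      exact hF t y hy
  -- main computation
  have main : ∀ φ' ψ' : Ω^ (Fin (n + 1)) M m,
      (⟦ptMul φ' ψ'⟧ : π_ (n + 1) M (m * m)) =
        ((· * ·) : π_ (n + 1) M (m * m) → π_ (n + 1) M (m * m) → π_ (n + 1) M (m * m))
          ⟦ptMul φ' GenLoop.const⟧ ⟦ptMul ψ' GenLoop.const⟧ := by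
    intro φ' ψ'
    have e1 : (⟦GenLoop.transAt 0 GenLoop.const φ'⟧ : π_ (n + 1) M m) = ⟦φ'⟧ := by
      rw [← HomotopyGroup.mul_spec, ← HomotopyGroup.one_def]
      exact @mul_one (π_ (n + 1) M m) _ ⟦φ'⟧
    have e2 : (⟦GenLoop.transAt 0 ψ' GenLoop.const⟧ : π_ (n + 1) M m) = ⟦ψ'⟧ := by
      rw [← HomotopyGroup.mul_spec, ← HomotopyGroup.one_def]
      exact @one_mul (π_ (n + 1) M m) _ ⟦ψ'⟧
    have hk : (⟦ptMul GenLoop.const ψ'⟧ : π_ (n + 1) M (m * m)) = ⟦ptMul ψ' GenLoop.const⟧ :=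
      Quotient.sound (key ψ')
    calc (⟦ptMul φ' ψ'⟧ : π_ (n + 1) M (m * m))
        = ⟦ptMul (GenLoop.transAt 0 GenLoop.const φ') (GenLoop.transAt 0 ψ' GenLoop.const)⟧ :=
          Quotient.sound
            (Stmt4Aux.ptMul_homotopic (Quotient.exact e1.symm) (Quotient.exact e2.symm))
      _ = ⟦GenLoop.transAt 0 (ptMul GenLoop.const ψ') (ptMul φ' GenLoop.const)⟧ := by
          rw [Stmt4Aux.ptMul_transAt]
      _ = @id (Quotient (GenLoop.Homotopic.setoid (Fin (n + 1)) (m * m)))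
            (((· * ·) : π_ (n + 1) M (m * m) → π_ (n + 1) M (m * m) → π_ (n + 1) M (m * m))
            ⟦ptMul φ' GenLoop.const⟧ ⟦ptMul GenLoop.const ψ'⟧) :=
          HomotopyGroup.mul_spec.symm
      _ = _ := by rw [hk]; rfl
  have hinv : (⟦ptMul (GenLoop.symmAt 0 φ) GenLoop.const⟧ : π_ (n + 1) M (m * m))
      = Inv.inv (α := π_ (n + 1) M (m * m)) ⟦ptMul φ GenLoop.const⟧ := by
    rw [Stmt4Aux.ptMul_symmAt]
    exact HomotopyGroup.inv_spec.symm
  refine ⟨main φ ψ, ?_, ?_⟩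
  · rw [main φ (GenLoop.symmAt 0 φ), hinv]
    exact @mul_inv_cancel (π_ (n + 1) M (m * m)) _ ⟦ptMul φ GenLoop.const⟧
  · rw [main (GenLoop.symmAt 0 φ) φ, hinv]
    exact @inv_mul_cancel (π_ (n + 1) M (m * m)) _ ⟦ptMul φ GenLoop.const⟧
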